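/- Let Q be a symmetric n×n real matrix, f ∈ ℝⁿ, and suppose σ̄ ∈ S⁺ = {σ > 0 : Q + 2Diag(σ) positive definite} is a critical point of P^d(σ) = -(1/2)(f+σ)ᵀ[Q+2Diag(σ)]⁻¹(f+σ), and set x̄ = [Q+2Diag(σ̄)]⁻¹(f+σ̄). Then x̄ is a global minimizer of P(x) = (1/2)xᵀQx - fᵀx over the cube [0,1]ⁿ, and σ̄ is a global maximizer of P^d over S⁺, with P(x̄) = P^d(σ̄). -/

import Mathlib

open Matrix

lemma quad_lower {n : ℕ} (M : Matrix (Fin n) (Fin n) ℝ) (hM : M.PosSemidef)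
    (b z : Fin n → ℝ) (hz : M.mulVec z = b) (x : Fin n → ℝ) :
    -(1/2 : ℝ) * (b ⬝ᵥ z) ≤ (1/2 : ℝ) * (x ⬝ᵥ M.mulVec x) - b ⬝ᵥ x := by
  have hsym : Mᵀ = M := hM.1
  have h0 : (0:ℝ) ≤ (x - z) ⬝ᵥ M.mulVec (x - z) := by simpa using hM.dotProduct_mulVec_nonneg (x - z)
  have e1 : x ⬝ᵥ M.mulVec z = b ⬝ᵥ x := by rw [hz]; exact dotProduct_comm _ _
  have e2 : z ⬝ᵥ M.mulVec x = b ⬝ᵥ x := by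
    rw [dotProduct_mulVec, ← hsym, ← mulVec_transpose, transpose_transpose, hz]
  have e3 : z ⬝ᵥ M.mulVec z = b ⬝ᵥ z := by
    rw [dotProduct_mulVec, ← hsym, ← mulVec_transpose, transpose_transpose, hz,
      dotProduct_comm]
  rw [Matrix.mulVec_sub, dotProduct_sub, sub_dotProduct, sub_dotProduct, e1, e2, e3] at h0
  linarith


attribute [local instance] Matrix.linftyOpNormedRing Matrix.linftyOpNormedAlgebra

noncomputable def diagCLM (n : ℕ) : (Fin n → ℝ) →L[ℝ] Matrix (Fin n) (Fin n) ℝ :=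
  LinearMap.toContinuousLinearMap
    { toFun := fun h => (2 : ℝ) • Matrix.diagonal h
      map_add' := fun a b => by
        ext i j
        by_cases h : i = j <;> simp [Matrix.diagonal_apply, h, mul_add]
      map_smul' := fun c a => by
        ext i j
        by_cases h : i = j <;> simp [Matrix.diagonal_apply, h]; ring }

noncomputable def entryCLM {n : ℕ} (i j : Fin n) : Matrix (Fin n) (Fin n) ℝ →L[ℝ] ℝ :=
  LinearMap.toContinuousLinearMap
    { toFun := fun M => M i j
      map_add' := fun _ _ => rfl
      map_smul' := fun _ _ => rfl }

@[simp] lemma diagCLM_apply {n : ℕ} (h : Fin n → ℝ) :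
    diagCLM n h = (2:ℝ) • Matrix.diagonal h := rfl
@[simp] lemma entryCLM_apply {n : ℕ} (i j : Fin n) (M : Matrix (Fin n) (Fin n) ℝ) :
    entryCLM i j M = M i j := rfl

lemma hasFDerivAt_A {n : ℕ} (Q : Matrix (Fin n) (Fin n) ℝ) (σb : Fin n → ℝ) :
    HasFDerivAt (fun σ : Fin n → ℝ => Q + 2 • Matrix.diagonal σ) (diagCLM n) σb := by
  have h := ((diagCLM n).hasFDerivAt (x := σb)).const_add Q
  refine h.congr_of_eventuallyEq (Filter.Eventually.of_forall fun σ => ?_)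
  simp [two_smul, two_nsmul]

set_option maxHeartbeats 1600000 in
lemma crit_binary {n : ℕ} (Q : Matrix (Fin n) (Fin n) ℝ) (hQ : Q.IsSymm) (f σb : Fin n → ℝ)
    (hpd : (Q + 2 • Matrix.diagonal σb).PosDef)
    (hcrit : HasFDerivAt
      (fun σ : Fin n → ℝ =>
        -(1 / 2 : ℝ) * ((f + σ) ⬝ᵥ (Q + 2 • Matrix.diagonal σ)⁻¹.mulVec (f + σ)))
      (0 : (Fin n → ℝ) →L[ℝ] ℝ) σb)
    (xb : Fin n → ℝ) (hxb : xb = (Q + 2 • Matrix.diagonal σb)⁻¹.mulVec (f + σb))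
    (k : Fin n) : xb k * xb k = xb k := by
  classical
  set A : (Fin n → ℝ) → Matrix (Fin n) (Fin n) ℝ :=
    fun σ => Q + 2 • Matrix.diagonal σ with hA
  have hu : IsUnit (A σb) := hpd.isUnit
  set U : (Matrix (Fin n) (Fin n) ℝ)ˣ := hu.unit with hU
  have hUspec : (U : Matrix (Fin n) (Fin n) ℝ) = A σb := hu.unit_spec
  set W : Matrix (Fin n) (Fin n) ℝ := (A σb)⁻¹ with hW
  have hUinv : ((U⁻¹ : (Matrix (Fin n) (Fin n) ℝ)ˣ) : Matrix (Fin n) (Fin n) ℝ) = W := by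
    rw [Matrix.coe_units_inv, hUspec]
  set Dinv : Matrix (Fin n) (Fin n) ℝ →L[ℝ] Matrix (Fin n) (Fin n) ℝ :=
    -(ContinuousLinearMap.mulLeftRight ℝ _ W W) with hDinv
  -- derivative of σ ↦ Ring.inverse (A σ)
  have hWmat : HasFDerivAt (fun σ => Ring.inverse (A σ)) (Dinv.comp (diagCLM n)) σb := by
    have h1 := hasFDerivAt_ringInverse (𝕜 := ℝ) U
    rw [hUspec, hUinv] at h1
    exact h1.comp σb (hasFDerivAt_A Q σb)
  have hWij : ∀ i j : Fin n, HasFDerivAt (fun σ => Ring.inverse (A σ) i j)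
      ((entryCLM i j).comp (Dinv.comp (diagCLM n))) σb := fun i j =>
    ((entryCLM i j).hasFDerivAt).comp σb hWmat
  have hui : ∀ i : Fin n, HasFDerivAt (fun σ : Fin n → ℝ => f i + σ i)
      (ContinuousLinearMap.proj i : (Fin n → ℝ) →L[ℝ] ℝ) σb := by
    intro i
    have h := (hasFDerivAt_const (f i) σb).add
      ((ContinuousLinearMap.proj i : (Fin n → ℝ) →L[ℝ] ℝ).hasFDerivAt)
    rwa [zero_add] at h
  set Wb : Matrix (Fin n) (Fin n) ℝ := Ring.inverse (A σb) with hWb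
  set b : Fin n → ℝ := fun i => f i + σb i with hb
  set T' : Fin n → Fin n → ((Fin n → ℝ) →L[ℝ] ℝ) := fun i j =>
    b i • ((Wb i j) • (ContinuousLinearMap.proj j : (Fin n → ℝ) →L[ℝ] ℝ) +
        b j • ((entryCLM i j).comp (Dinv.comp (diagCLM n)))) +
      (Wb i j * b j) • (ContinuousLinearMap.proj i : (Fin n → ℝ) →L[ℝ] ℝ) with hT'
  have hterm : ∀ i j : Fin n, HasFDerivAt
      (fun σ => (f i + σ i) * (Ring.inverse (A σ) i j * (f j + σ j))) (T' i j) σb := by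
    intro i j
    exact (hui i).mul ((hWij i j).mul (hui j))
  have hsum : HasFDerivAt
      (fun σ => ∑ i, ∑ j, (f i + σ i) * (Ring.inverse (A σ) i j * (f j + σ j)))
      (∑ i, ∑ j, T' i j) σb :=
    HasFDerivAt.fun_sum fun i _ => HasFDerivAt.fun_sum fun j _ => hterm i j
  have hPd' : HasFDerivAt
      (fun σ : Fin n → ℝ =>
        -(1 / 2 : ℝ) * ((f + σ) ⬝ᵥ (Q + 2 • Matrix.diagonal σ)⁻¹.mulVec (f + σ)))
      ((-(1 / 2 : ℝ)) • ∑ i, ∑ j, T' i j) σb := by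
    have h := hsum.const_mul (-(1 / 2 : ℝ))
    refine h.congr_of_eventuallyEq (Filter.Eventually.of_forall fun σ => ?_)
    simp only [hA, Matrix.nonsing_inv_eq_ringInverse]
    simp [dotProduct, Matrix.mulVec, Finset.mul_sum, mul_assoc]
  have h0 : ((-(1 / 2 : ℝ)) • ∑ i, ∑ j, T' i j) = 0 := hPd'.unique hcrit
  have hk := congrArg (fun L : (Fin n → ℝ) →L[ℝ] ℝ => L (Pi.single k 1)) h0
  simp only [ContinuousLinearMap.smul_apply, ContinuousLinearMap.zero_apply,
    ContinuousLinearMap.sum_apply, hT', ContinuousLinearMap.add_apply,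
    ContinuousLinearMap.comp_apply, ContinuousLinearMap.proj_apply, entryCLM_apply,
    diagCLM_apply, hDinv, ContinuousLinearMap.neg_apply,
    ContinuousLinearMap.mulLeftRight_apply, smul_eq_mul, Pi.single_apply] at hk
  have hWbW : Wb = W := by rw [hWb, hW, Matrix.nonsing_inv_eq_ringInverse]
  have hE : ∀ x x1 : Fin n, ((W * ((2:ℝ) • Matrix.diagonal (Pi.single k 1)) * W : Matrix (Fin n) (Fin n) ℝ)) x x1
      = 2 * (W x k * W k x1) := by
    intro x x1
    simp [Matrix.mul_apply, Matrix.smul_apply, Matrix.diagonal_apply,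
      Pi.single_apply, mul_ite, ite_mul, mul_zero, zero_mul, mul_one,
      Finset.sum_ite_eq, Finset.sum_ite_eq', smul_eq_mul, Finset.mul_sum, Finset.sum_mul]
    ring
  have hD : ((-(ContinuousLinearMap.mulLeftRight ℝ _ W W)) ∘SL diagCLM n) (Pi.single k 1) = -(W * ((2:ℝ) • Matrix.diagonal (Pi.single k 1)) * W) := rfl
  erw [hD] at hk
  simp only [hWbW, Matrix.neg_apply, hE] at hk
  have hAsym : (A σb)ᵀ = A σb := by
    rw [hA]
    simp only [Matrix.transpose_add, Matrix.transpose_smul, Matrix.diagonal_transpose]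
    rw [hQ.eq]
  have hWsymm : Wᵀ = W := by
    rw [hW, Matrix.transpose_nonsing_inv, hAsym]
  have hWsym : ∀ i : Fin n, W i k = W k i := by
    intro i
    calc W i k = Wᵀ k i := rfl
      _ = W k i := by rw [hWsymm]
  have hxbk : xb k = ∑ j, W k j * b j := by rw [hxb]; rfl
  have h1 : ∀ x : Fin n, (∑ x1 : Fin n, b x * (W x x1 * if x1 = k then 1 else 0))
      = b x * W x k := by
    intro x
    simp [mul_ite, mul_one, mul_zero, Finset.sum_ite_eq']
  have h2 : ∀ x : Fin n, (∑ x1 : Fin n, b x * (b x1 * (-(2 * (W x k * W k x1)))))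
      = -2 * (b x * W x k) * xb k := by
    intro x
    rw [hxbk, Finset.mul_sum]
    exact Finset.sum_congr rfl fun x1 _ => by ring
  have hbW : (∑ x : Fin n, b x * W x k) = xb k := by
    rw [hxbk]
    exact Finset.sum_congr rfl fun x _ => by rw [hWsym x, mul_comm]
  have hrow : ∀ x : Fin n, (∑ x1 : Fin n,
      (b x * ((W x x1 * if x1 = k then 1 else 0) + b x1 * -(2 * (W x k * W k x1))) +
        W x x1 * b x1 * if x = k then 1 else 0))
      = (b x * W x k + -2 * (b x * W x k) * xb k)
        + (if x = k then xb k else 0) := by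
    intro x
    rw [Finset.sum_add_distrib]
    congr 1
    · rw [← h2 x, ← h1 x, ← Finset.sum_add_distrib]
      exact Finset.sum_congr rfl fun x1 _ => by ring
    · by_cases hx : x = k
      · subst hx
        simp only [if_true]
        rw [hxbk]
        exact Finset.sum_congr rfl fun x1 _ => by ring
      · simp [hx]
  have hfinal : (∑ x : Fin n, ∑ x1 : Fin n,
      (b x * ((W x x1 * if x1 = k then 1 else 0) + b x1 * -(2 * (W x k * W k x1))) +
        W x x1 * b x1 * if x = k then 1 else 0))
      = 2 * xb k + -2 * xb k * xb k := by
    rw [Finset.sum_congr rfl fun x _ => hrow x, Finset.sum_add_distrib,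
      Finset.sum_add_distrib, Finset.sum_ite_eq' Finset.univ k fun _ => xb k]
    simp only [Finset.mem_univ, if_true]
    rw [← Finset.sum_mul, ← Finset.mul_sum, hbW]
    ring
  rw [hfinal] at hk
  nlinarith [hk]


theorem global_min_case_Splus
    (n : ℕ) (Q : Matrix (Fin n) (Fin n) ℝ) (hQ : Q.IsSymm) (f : Fin n → ℝ)
    (P : (Fin n → ℝ) → ℝ)
    (hP : ∀ x, P x = (1 / 2 : ℝ) * (x ⬝ᵥ Q.mulVec x) - f ⬝ᵥ x)
    (Pd : (Fin n → ℝ) → ℝ)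
    (hPd : ∀ σ, Pd σ =
      -(1 / 2 : ℝ) * ((f + σ) ⬝ᵥ (Q + 2 • Matrix.diagonal σ)⁻¹.mulVec (f + σ)))
    (σb : Fin n → ℝ)
    (hσb : (∀ i, 0 < σb i) ∧ (Q + 2 • Matrix.diagonal σb).PosDef)
    (hcrit : HasFDerivAt Pd (0 : (Fin n → ℝ) →L[ℝ] ℝ) σb)
    (xb : Fin n → ℝ) (hxb : xb = (Q + 2 • Matrix.diagonal σb)⁻¹.mulVec (f + σb)) :
    xb ∈ Set.Icc (0 : Fin n → ℝ) 1 ∧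
    (∀ x ∈ Set.Icc (0 : Fin n → ℝ) 1, P xb ≤ P x) ∧
    (∀ σ : Fin n → ℝ, (∀ i, 0 < σ i) → (Q + 2 • Matrix.diagonal σ).PosDef →
      Pd σ ≤ Pd σb) ∧
    P xb = Pd σb := by
  classical
  obtain ⟨hσpos, hpd⟩ := hσb
  have hPdfun : Pd = fun σ : Fin n → ℝ =>
      -(1 / 2 : ℝ) * ((f + σ) ⬝ᵥ (Q + 2 • Matrix.diagonal σ)⁻¹.mulVec (f + σ)) :=
    funext hPd
  have hcrit' : HasFDerivAt
      (fun σ : Fin n → ℝ =>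
        -(1 / 2 : ℝ) * ((f + σ) ⬝ᵥ (Q + 2 • Matrix.diagonal σ)⁻¹.mulVec (f + σ)))
      (0 : (Fin n → ℝ) →L[ℝ] ℝ) σb := hPdfun ▸ hcrit
  have hbin : ∀ k, xb k * xb k = xb k :=
    crit_binary Q hQ f σb hpd hcrit' xb hxb
  -- xb solves the linear system
  have hdet : IsUnit (Q + 2 • Matrix.diagonal σb).det :=
    (Matrix.isUnit_iff_isUnit_det _).mp hpd.isUnit
  have hax : (Q + 2 • Matrix.diagonal σb).mulVec xb = f + σb := by
    rw [hxb, Matrix.mulVec_mulVec, Matrix.mul_nonsing_inv _ hdet, Matrix.one_mulVec]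
  -- quadratic expansion
  have hq : ∀ (σ x : Fin n → ℝ),
      x ⬝ᵥ (Q + 2 • Matrix.diagonal σ).mulVec x
        = x ⬝ᵥ Q.mulVec x + ∑ i, 2 * (σ i * (x i * x i)) := by
    intro σ x
    rw [Matrix.add_mulVec, dotProduct_add]
    congr 1
    simp only [dotProduct, Matrix.mulVec, Matrix.smul_apply, Matrix.diagonal_apply,
      smul_eq_mul, nsmul_eq_mul, Nat.cast_ofNat, mul_ite, ite_mul, mul_zero, zero_mul,
      Finset.sum_ite_eq, Finset.mem_univ, if_true]
    exact Finset.sum_congr rfl fun i _ => by ring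
  have hXi : ∀ (σ x : Fin n → ℝ),
      (1 / 2 : ℝ) * (x ⬝ᵥ (Q + 2 • Matrix.diagonal σ).mulVec x) - (f + σ) ⬝ᵥ x
        = P x + ∑ i, σ i * (x i * x i - x i) := by
    intro σ x
    rw [hq, hP, add_dotProduct]
    have h1 : ∑ i, σ i * (x i * x i - x i)
        = (∑ i, σ i * (x i * x i)) - ∑ i, σ i * x i := by
      rw [← Finset.sum_sub_distrib]
      exact Finset.sum_congr rfl fun i _ => by ring
    have h2 : ∑ i, 2 * (σ i * (x i * x i)) = 2 * ∑ i, σ i * (x i * x i) := by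
      rw [Finset.mul_sum]
    have h3 : σ ⬝ᵥ x = ∑ i, σ i * x i := rfl
    rw [h1, h2, h3]
    ring
  -- P xb = Pd σb
  have hbsum : ∑ i, σb i * (xb i * xb i - xb i) = 0 :=
    Finset.sum_eq_zero fun i _ => by rw [hbin i]; ring
  have hPdb : Pd σb = -(1 / 2 : ℝ) * ((f + σb) ⬝ᵥ xb) := by rw [hPd, hxb]
  have hPxb : P xb = Pd σb := by
    have h := hXi σb xb
    rw [hbsum, add_zero] at h
    rw [hax] at h
    have hc : xb ⬝ᵥ (f + σb) = (f + σb) ⬝ᵥ xb := dotProduct_comm _ _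
    rw [hc] at h
    rw [hPdb, ← h]
    ring
  -- membership in the cube
  have hcases : ∀ k, xb k = 0 ∨ xb k = 1 := by
    intro k
    have h : xb k * (xb k - 1) = 0 := by
      have := hbin k; ring_nf; linarith
    rcases mul_eq_zero.mp h with h' | h'
    · exact Or.inl h'
    · exact Or.inr (by linarith)
  have hmem : xb ∈ Set.Icc (0 : Fin n → ℝ) 1 := by
    constructor
    · intro k
      rcases hcases k with h | h <;> simp [h]
    · intro k
      rcases hcases k with h | h <;> simp [h]
  refine ⟨hmem, ?_, ?_, hPxb⟩
  · -- global minimality over the cube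
    intro x hx
    have hlow := quad_lower (Q + 2 • Matrix.diagonal σb) hpd.posSemidef (f + σb) xb hax x
    have hineq : ∑ i, σb i * (x i * x i - x i) ≤ 0 := by
      apply Finset.sum_nonpos
      intro i _
      have h0 : (0:ℝ) ≤ x i := hx.1 i
      have h1 : x i ≤ 1 := hx.2 i
      have : x i * x i ≤ x i := by nlinarith
      have hs : 0 ≤ σb i := (hσpos i).le
      nlinarith
    have hXx := hXi σb x
    have : Pd σb ≤ P x + ∑ i, σb i * (x i * x i - x i) := by
      rw [← hXx, hPdb]
      exact hlow
    linarith [hPxb]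
  · -- global maximality over S⁺
    intro σ hσpos' hpdσ
    have hdetσ : IsUnit (Q + 2 • Matrix.diagonal σ).det :=
      (Matrix.isUnit_iff_isUnit_det _).mp hpdσ.isUnit
    set z : Fin n → ℝ := (Q + 2 • Matrix.diagonal σ)⁻¹.mulVec (f + σ) with hz
    have haz : (Q + 2 • Matrix.diagonal σ).mulVec z = f + σ := by
      rw [hz, Matrix.mulVec_mulVec, Matrix.mul_nonsing_inv _ hdetσ, Matrix.one_mulVec]
    have hlow := quad_lower (Q + 2 • Matrix.diagonal σ) hpdσ.posSemidef (f + σ) z haz xb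
    have hXx := hXi σ xb
    have hsum0 : ∑ i, σ i * (xb i * xb i - xb i) = 0 :=
      Finset.sum_eq_zero fun i _ => by rw [hbin i]; ring
    rw [hXx, hsum0, add_zero] at hlow
    have hPdσ : Pd σ = -(1 / 2 : ℝ) * ((f + σ) ⬝ᵥ z) := by rw [hPd, hz]
    rw [hPxb] at hlow
    rw [hPdσ]
    exact hlow
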